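/- Let p be a prime and let R be a discrete valuation ring of characteristic p whose residue field is finite with q elements, and let m ≥ 1 be an integer. Set W := (1+𝔪)/(1+𝔪^m), where 𝔪 is the maximal ideal of R. Then the quotient W/W^p of W by its subgroup of p-th powers is a finite group of order q^{m − ⌈m/p⌉}. -/

import Mathlib

open IsLocalRing



/-- The subgroup `1 + 𝔪^k` of units. -/
def myU (R : Type*) [CommRing R] [IsLocalRing R] (k : ℕ) : Subgroup Rˣ where
  carrier := {u : Rˣ | (u : R) - 1 ∈ maximalIdeal R ^ k}
  one_mem' := by simpa using (maximalIdeal R ^ k).zero_mem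
  mul_mem' := by
    intro a b ha hb
    have h : ((a * b : Rˣ) : R) - 1
        = ((a : R) - 1) * ((b : R) - 1) + ((a : R) - 1) + ((b : R) - 1) := by
      push_cast; ring
    simp only [Set.mem_setOf_eq] at ha hb ⊢
    rw [h]
    exact add_mem (add_mem (Ideal.mul_mem_right _ _ ha) ha) hb
  inv_mem' := by
    intro a ha
    simp only [Set.mem_setOf_eq] at ha ⊢
    have e : ((a⁻¹ : Rˣ) : R) * ((a : Rˣ) : R) = 1 := by
      exact_mod_cast a.inv_mul
    have h : ((a⁻¹ : Rˣ) : R) - 1 = -(((a⁻¹ : Rˣ) : R) * (((a : Rˣ) : R) - 1)) := by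
      linear_combination e
    rw [h]
    exact neg_mem (Ideal.mul_mem_left _ _ ha)

theorem mem_myU {R : Type*} [CommRing R] [IsLocalRing R] (k : ℕ) (u : Rˣ) :
    u ∈ myU R k ↔ (u : R) - 1 ∈ maximalIdeal R ^ k := Iff.rfl

theorem myIsUnit_one_add {R : Type*} [CommRing R] [IsLocalRing R] {x : R}
    (hx : x ∈ maximalIdeal R) : IsUnit (1 + x) := by
  by_contra h
  have h1 : (1 + x) ∈ maximalIdeal R := by
    rw [IsLocalRing.mem_maximalIdeal]; exact h
  have h2 : (1 : R) ∈ maximalIdeal R := by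
    have := sub_mem h1 hx; simpa using this
  exact (IsLocalRing.maximalIdeal.isMaximal R).ne_top ((Ideal.eq_top_iff_one _).mpr h2)

/-- Transfer a bijection along an ideal quotient. -/
theorem myCardOf {R : Type*} [CommRing R] (J : Ideal R) {β : Type*} (f : R → β)
    (hwd : ∀ a b : R, f a = f b ↔ a - b ∈ J) (hsurj : Function.Surjective f) :
    Nonempty ((R ⧸ J) ≃ β) := by
  refine ⟨Equiv.ofBijective
    (fun x => Quotient.liftOn' x f (fun a b h => (hwd a b).mpr ?_)) ⟨?_, ?_⟩⟩
  · exact (Submodule.quotientRel_def J).mp h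
  · intro x y
    obtain ⟨a, rfl⟩ := Ideal.Quotient.mk_surjective x
    obtain ⟨b, rfl⟩ := Ideal.Quotient.mk_surjective y
    intro h
    exact Ideal.Quotient.eq.mpr ((hwd a b).mp h)
  · intro b
    obtain ⟨a, rfl⟩ := hsurj b
    exact ⟨Ideal.Quotient.mk J a, rfl⟩

theorem myArith {p m : ℕ} (hp : 2 ≤ p) (n : ℕ) :
    m ≤ n * p ↔ (m + p - 1) / p ≤ n := by
  constructor
  · intro h
    have h4 : n * p + p - 1 = p * n + (p - 1) := by rw [mul_comm]; omega
    have h1 : (m + p - 1) / p ≤ (n * p + p - 1) / p := Nat.div_le_div_right (by omega)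
    rw [h4] at h1
    have h2 : (p * n + (p - 1)) / p = n + (p - 1) / p := Nat.mul_add_div (by omega) n (p - 1)
    have h3 : (p - 1) / p = 0 := Nat.div_eq_of_lt (by omega)
    omega
  · intro h
    have h2 := Nat.div_add_mod (m + p - 1) p
    have h3 : (m + p - 1) % p < p := Nat.mod_lt _ (by omega)
    have h4 : m ≤ p * ((m + p - 1) / p) := by omega
    have h5 : p * ((m + p - 1) / p) ≤ p * n := Nat.mul_le_mul_left p h
    rw [mul_comm]
    omega

theorem myDvdCeil {R : Type*} [CommRing R] [IsDomain R] [IsDiscreteValuationRing R]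
    {p m : ℕ} (hp : p.Prime) {π : R} (hπ : Irreducible π) (x : R) :
    π ^ m ∣ x ^ p ↔ π ^ ((m + p - 1) / p) ∣ x := by
  rcases eq_or_ne x 0 with rfl | hx
  · simp [zero_pow hp.ne_zero]
  · obtain ⟨n, u, rfl⟩ := IsDiscreteValuationRing.eq_unit_mul_pow_irreducible hx hπ
    have hu : IsUnit (u : R) := u.isUnit
    rw [mul_pow, ← pow_mul, (hu.pow p).dvd_mul_left, hu.dvd_mul_left,
      pow_dvd_pow_iff hπ.ne_zero hπ.not_isUnit, pow_dvd_pow_iff hπ.ne_zero hπ.not_isUnit]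
    exact myArith hp.two_le n

theorem myCardQuot {R : Type*} [CommRing R] [IsDomain R] [IsDiscreteValuationRing R]
    [Finite (R ⧸ maximalIdeal R)] (j : ℕ) :
    Finite (R ⧸ (maximalIdeal R) ^ j) ∧
      Nat.card (R ⧸ (maximalIdeal R) ^ j) = Nat.card (R ⧸ maximalIdeal R) ^ j := by
  obtain ⟨π, hπ⟩ := IsDiscreteValuationRing.exists_irreducible R
  have hspan : maximalIdeal R = Ideal.span {π} :=
    (IsDiscreteValuationRing.irreducible_iff_uniformizer π).mp hπ
  have hmem : ∀ (k : ℕ) (x : R), x ∈ (maximalIdeal R) ^ k ↔ π ^ k ∣ x := by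
    intro k x
    rw [hspan, Ideal.span_singleton_pow, Ideal.mem_span_singleton]
  have hmem1 : ∀ x : R, x ∈ maximalIdeal R ↔ π ∣ x := by
    intro x; rw [hspan, Ideal.mem_span_singleton]
  induction j with
  | zero =>
    have hsub : Subsingleton (R ⧸ (maximalIdeal R) ^ 0) := by
      constructor
      intro a b
      obtain ⟨x, rfl⟩ := Ideal.Quotient.mk_surjective a
      obtain ⟨y, rfl⟩ := Ideal.Quotient.mk_surjective b
      exact Ideal.Quotient.eq.mpr (by simp)
    refine ⟨Finite.of_subsingleton, ?_⟩
    rw [pow_zero]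
    exact Nat.card_eq_one_iff_unique.mpr ⟨hsub, ⟨0⟩⟩
  | succ j ih =>
    obtain ⟨hfin, hcard⟩ := ih
    have hle : (maximalIdeal R) ^ (j + 1) ≤ (maximalIdeal R) ^ j :=
      Ideal.pow_le_pow_right (by omega)
    set f : R ⧸ (maximalIdeal R) ^ (j + 1) →+* R ⧸ (maximalIdeal R) ^ j :=
      Ideal.Quotient.factor hle with hf
    have hfmk : ∀ x : R, f (Ideal.Quotient.mk _ x) = Ideal.Quotient.mk _ x := by
      intro x; exact Ideal.Quotient.factor_mk hle x
    set K := f.toAddMonoidHom.ker with hK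
    -- the kernel is in bijection with the residue field
    have hπj : (π : R) ^ j ≠ 0 := pow_ne_zero j hπ.ne_zero
    have f0pf : ∀ r : R, (Ideal.Quotient.mk ((maximalIdeal R) ^ (j + 1)) (π ^ j * r)) ∈ K := by
      intro r
      rw [hK, AddMonoidHom.mem_ker]
      show f (Ideal.Quotient.mk _ (π ^ j * r)) = 0
      rw [hfmk]
      exact Ideal.Quotient.eq_zero_iff_mem.mpr ((hmem j _).mpr ⟨r, rfl⟩)
    have e1 : Nonempty ((R ⧸ maximalIdeal R) ≃ K) := by
      apply myCardOf (maximalIdeal R)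
        (f := fun r => (⟨Ideal.Quotient.mk _ (π ^ j * r), f0pf r⟩ : K))
      · intro a b
        rw [Subtype.ext_iff]
        show Ideal.Quotient.mk _ _ = Ideal.Quotient.mk _ _ ↔ _
        rw [Ideal.Quotient.eq, hmem (j + 1), hmem1, ← mul_sub, pow_succ,
          mul_dvd_mul_iff_left hπj]
      · rintro ⟨a, ha⟩
        obtain ⟨x, rfl⟩ := Ideal.Quotient.mk_surjective a
        rw [hK, AddMonoidHom.mem_ker] at ha
        have hx : x ∈ (maximalIdeal R) ^ j := by
          rw [← Ideal.Quotient.eq_zero_iff_mem]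
          rw [show f.toAddMonoidHom (Ideal.Quotient.mk _ x)
              = f (Ideal.Quotient.mk _ x) from rfl, hfmk] at ha
          exact ha
        obtain ⟨r, hr⟩ := (hmem j x).mp hx
        refine ⟨r, Subtype.ext ?_⟩
        show Ideal.Quotient.mk _ (π ^ j * r) = Ideal.Quotient.mk _ x
        rw [← hr]
    obtain ⟨e1⟩ := e1
    have hfinK : Finite K := Finite.of_equiv _ e1
    have hcardK : Nat.card K = Nat.card (R ⧸ maximalIdeal R) := (Nat.card_congr e1).symm
    have fsurj : Function.Surjective f.toAddMonoidHom := by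
      intro b
      obtain ⟨x, rfl⟩ := Ideal.Quotient.mk_surjective b
      exact ⟨Ideal.Quotient.mk _ x, hfmk x⟩
    have e2 := QuotientAddGroup.quotientKerEquivOfSurjective f.toAddMonoidHom fsurj
    have e3 : (R ⧸ (maximalIdeal R) ^ (j + 1)) ≃
        ((R ⧸ (maximalIdeal R) ^ (j + 1)) ⧸ K) × K :=
      AddSubgroup.addGroupEquivQuotientProdAddSubgroup
    have hfinQ : Finite ((R ⧸ (maximalIdeal R) ^ (j + 1)) ⧸ K) :=
      Finite.of_equiv _ e2.toEquiv.symm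
    have hfinA : Finite (R ⧸ (maximalIdeal R) ^ (j + 1)) := Finite.of_equiv _ e3.symm
    refine ⟨hfinA, ?_⟩
    rw [Nat.card_congr e3, Nat.card_prod, Nat.card_congr e2.toEquiv, hcard, hcardK, pow_succ]
theorem myEquivSub {R : Type*} [CommRing R] [IsDomain R] [IsDiscreteValuationRing R]
    {π : R} (hπ : Irreducible π) {m c : ℕ} (hc1 : 1 ≤ c) (hcm : c ≤ m)
    (Pred : ((myU R 1) ⧸ (myU R m).subgroupOf (myU R 1)) → Prop)
    (hPred : ∀ v : (myU R 1), Pred (QuotientGroup.mk v) ↔ π ^ c ∣ ((v : Rˣ) : R) - 1) :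
    Nonempty ((R ⧸ (maximalIdeal R) ^ (m - c)) ≃ {w // Pred w}) := by
  have hspan : maximalIdeal R = Ideal.span {π} :=
    (IsDiscreteValuationRing.irreducible_iff_uniformizer π).mp hπ
  have hmem : ∀ (k : ℕ) (x : R), x ∈ (maximalIdeal R) ^ k ↔ π ^ k ∣ x := by
    intro k x
    rw [hspan, Ideal.span_singleton_pow, Ideal.mem_span_singleton]
  have hπc : (π : R) ^ c ≠ 0 := pow_ne_zero c hπ.ne_zero
  have helt : ∀ r : R, IsUnit (1 + π ^ c * r) := by
    intro r
    apply myIsUnit_one_add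
    rw [hspan, Ideal.mem_span_singleton]
    exact dvd_mul_of_dvd_left (dvd_pow_self π (by omega)) r
  have heltmem : ∀ r : R, ((helt r).unit : Rˣ) ∈ myU R 1 := by
    intro r
    rw [mem_myU, hmem, (helt r).unit_spec, pow_one]
    have h1 : (1 : R) + π ^ c * r - 1 = π ^ c * r := by ring
    rw [h1]
    exact dvd_mul_of_dvd_left (dvd_pow_self π (by omega)) r
  set elt : R → (myU R 1) := fun r => ⟨(helt r).unit, heltmem r⟩ with helt_def
  have heltval : ∀ r : R, (((elt r : (myU R 1)) : Rˣ) : R) = 1 + π ^ c * r := by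
    intro r; exact (helt r).unit_spec
  have hmsplit : (π : R) ^ m = π ^ c * π ^ (m - c) := by
    rw [← pow_add]; congr 1; omega
  apply myCardOf ((maximalIdeal R) ^ (m - c))
    (f := fun r : R => (⟨QuotientGroup.mk (elt r),
      (hPred (elt r)).mpr (by rw [heltval]; exact ⟨r, by ring⟩)⟩ : {w // Pred w}))
  · intro a b
    rw [Subtype.ext_iff]
    show (QuotientGroup.mk (elt a) : _) = QuotientGroup.mk (elt b) ↔ _
    rw [QuotientGroup.eq, Subgroup.mem_subgroupOf, mem_myU, hmem m]
    have e : ((((elt a : Rˣ))⁻¹ : Rˣ) : R) * (((elt a) : Rˣ) : R) = 1 :=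
      Units.inv_mul (elt a : Rˣ)
    have hval : ((((elt a)⁻¹ * elt b : (myU R 1)) : Rˣ) : R) - 1
        = ((((elt a : Rˣ))⁻¹ : Rˣ) : R) * (π ^ c * (b - a)) := by
      push_cast
      linear_combination (((((elt a : Rˣ))⁻¹ : Rˣ) : R)) * heltval b
        - (((((elt a : Rˣ))⁻¹ : Rˣ) : R)) * heltval a + e
    rw [hval, ((elt a : Rˣ)⁻¹).isUnit.dvd_mul_left, hmsplit,
      mul_dvd_mul_iff_left hπc, dvd_sub_comm, hmem]
  · rintro ⟨w, hw⟩
    obtain ⟨v, rfl⟩ := QuotientGroup.mk_surjective w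
    obtain ⟨r, hr⟩ := (hPred v).mp hw
    refine ⟨r, Subtype.ext ?_⟩
    show (QuotientGroup.mk (elt r) : _) = QuotientGroup.mk v
    have hev : elt r = v := by
      apply Subtype.ext
      apply Units.ext
      show (((elt r) : Rˣ) : R) = ((v : Rˣ) : R)
      rw [heltval r]
      linear_combination -hr
    rw [hev]

/-- Let `p` be a prime and `R` a discrete valuation ring of characteristic
`p` with finite residue field of cardinality `q`, and let `m ≥ 1`.  With
`W := (1+𝔪)/(1+𝔪^m)`, the quotient `W/Wᵖ` of `W` by its subgroup of `p`-th powers is a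
finite group of order `q ^ (m - ⌈m/p⌉)` (where `⌈m/p⌉ = (m + p - 1) / p`). -/
theorem stmt2 (p : ℕ) (hp : p.Prime) (R : Type*) [CommRing R] [IsDomain R]
    [IsDiscreteValuationRing R] [CharP R p]
    (q : ℕ) (hq : Nat.card (IsLocalRing.ResidueField R) = q)
    (hqfin : Finite (IsLocalRing.ResidueField R))
    (m : ℕ) (hm : 1 ≤ m) :
    ∃ U : ℕ → Subgroup Rˣ,
      (∀ k : ℕ, ∀ u : Rˣ, u ∈ U k ↔ (u : R) - 1 ∈ (IsLocalRing.maximalIdeal R) ^ k) ∧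
      (Finite (((U 1) ⧸ ((U m).subgroupOf (U 1))) ⧸
          (powMonoidHom (α := (U 1) ⧸ ((U m).subgroupOf (U 1))) p).range) ∧
        Nat.card (((U 1) ⧸ ((U m).subgroupOf (U 1))) ⧸
          (powMonoidHom (α := (U 1) ⧸ ((U m).subgroupOf (U 1))) p).range)
          = q ^ (m - (m + p - 1) / p)) := by
  haveI := Fact.mk hp
  haveI hqfin' : Finite (R ⧸ maximalIdeal R) := hqfin
  have hq' : Nat.card (R ⧸ maximalIdeal R) = q := hq
  obtain ⟨π, hπ⟩ := IsDiscreteValuationRing.exists_irreducible R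
  have hspan : maximalIdeal R = Ideal.span {π} :=
    (IsDiscreteValuationRing.irreducible_iff_uniformizer π).mp hπ
  have hmem : ∀ (k : ℕ) (x : R), x ∈ (maximalIdeal R) ^ k ↔ π ^ k ∣ x := by
    intro k x
    rw [hspan, Ideal.span_singleton_pow, Ideal.mem_span_singleton]
  have hp2 := hp.two_le
  set c := (m + p - 1) / p with hc
  have hc1 : 1 ≤ c := by
    by_contra h
    have h0 : m ≤ 0 * p := (myArith hp2 0).mpr (by omega)
    omega
  have hcm : c ≤ m := (myArith hp2 m).mp (Nat.le_mul_of_pos_right m (by omega))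
  set φ : ((myU R 1) ⧸ (myU R m).subgroupOf (myU R 1)) →* ((myU R 1) ⧸ (myU R m).subgroupOf (myU R 1)) := powMonoidHom (α := ((myU R 1) ⧸ (myU R m).subgroupOf (myU R 1))) p with hφ
  have hPredKer : ∀ v : (myU R 1),
      ((QuotientGroup.mk v : ((myU R 1) ⧸ (myU R m).subgroupOf (myU R 1))) ∈ MonoidHom.ker φ) ↔ π ^ c ∣ ((v : Rˣ) : R) - 1 := by
    intro v
    rw [MonoidHom.mem_ker, hφ, powMonoidHom_apply, ← QuotientGroup.mk_pow,
      QuotientGroup.eq_one_iff, Subgroup.mem_subgroupOf, mem_myU, hmem m]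
    have hcoe : (((v ^ p : (myU R 1)) : Rˣ) : R) = (((v : Rˣ) : R)) ^ p := by
      push_cast; ring
    rw [hcoe]
    have hcharp : (((v : Rˣ) : R)) ^ p - 1 = (((v : Rˣ) : R) - 1) ^ p := by
      rw [sub_pow_char, one_pow]
    rw [hcharp, myDvdCeil hp hπ]
  obtain ⟨e2⟩ := myEquivSub hπ hc1 hcm (fun w => w ∈ MonoidHom.ker φ) hPredKer
  obtain ⟨e1⟩ := myEquivSub hπ (le_refl 1) hm (fun _ : ((myU R 1) ⧸ (myU R m).subgroupOf (myU R 1)) => True) (by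
    intro v
    simp only [true_iff]
    have hv := (mem_myU 1 (v : Rˣ)).mp v.2
    rw [hmem] at hv
    exact hv)
  have e1' : (R ⧸ (maximalIdeal R) ^ (m - 1)) ≃ ((myU R 1) ⧸ (myU R m).subgroupOf (myU R 1)) :=
    e1.trans (Equiv.subtypeUnivEquiv (fun _ => trivial))
  haveI hfinB : Finite (R ⧸ (maximalIdeal R) ^ (m - 1)) := (myCardQuot (m - 1)).1
  haveI hfinG : Finite ((myU R 1) ⧸ (myU R m).subgroupOf (myU R 1)) := Finite.of_equiv _ e1'
  haveI hfinQ : Finite (((myU R 1) ⧸ (myU R m).subgroupOf (myU R 1)) ⧸ φ.range) :=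
    Finite.of_surjective (QuotientGroup.mk : ((myU R 1) ⧸ (myU R m).subgroupOf (myU R 1)) → ((myU R 1) ⧸ (myU R m).subgroupOf (myU R 1)) ⧸ φ.range) QuotientGroup.mk_surjective
  have lag1 : Nat.card ((myU R 1) ⧸ (myU R m).subgroupOf (myU R 1)) = Nat.card (((myU R 1) ⧸ (myU R m).subgroupOf (myU R 1)) ⧸ φ.range) * Nat.card φ.range :=
    Subgroup.card_eq_card_quotient_mul_card_subgroup _
  have lag2 : Nat.card ((myU R 1) ⧸ (myU R m).subgroupOf (myU R 1)) = Nat.card (((myU R 1) ⧸ (myU R m).subgroupOf (myU R 1)) ⧸ φ.ker) * Nat.card φ.ker :=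
    Subgroup.card_eq_card_quotient_mul_card_subgroup _
  have iso : Nat.card (((myU R 1) ⧸ (myU R m).subgroupOf (myU R 1)) ⧸ φ.ker) = Nat.card φ.range :=
    Nat.card_congr (QuotientGroup.quotientKerEquivRange φ).toEquiv
  have hpos : 0 < Nat.card φ.range := Nat.card_pos
  have hkeycard : Nat.card (((myU R 1) ⧸ (myU R m).subgroupOf (myU R 1)) ⧸ φ.range) = Nat.card φ.ker := by
    have h1 : Nat.card (((myU R 1) ⧸ (myU R m).subgroupOf (myU R 1)) ⧸ φ.range) * Nat.card φ.range
        = Nat.card φ.ker * Nat.card φ.range := by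
      rw [← lag1, lag2, iso, mul_comm]
    exact Nat.eq_of_mul_eq_mul_right hpos h1
  have hkercard : Nat.card φ.ker = q ^ (m - c) := by
    have h2 : Nat.card φ.ker = Nat.card (R ⧸ (maximalIdeal R) ^ (m - c)) :=
      (Nat.card_congr e2).symm
    rw [h2, (myCardQuot (m - c)).2, hq']
  refine ⟨myU R, fun k u => Iff.rfl, ?_, ?_⟩
  · exact hfinQ
  · rw [hφ] at hkeycard hkercard
    rw [hkeycard, hkercard]
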